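/- If there exists a Luzin set in Baire space ℕ → ℕ, then property (**) holds: there exists a family (h_α : ℕ → ω₁)_{α<ω₁} such that for every k : ℕ → ω₁, for all but countably many α < ω₁ there are infinitely many n with h_α(n) = k(n). -/

import Mathlib

open Cardinal Set

/-- ω₁, the first uncountable ordinal, viewed as the set of all countable ordinals. -/
abbrev Omega1 := {o : Ordinal.{0} // o < (Cardinal.aleph 1).ord}


noncomputable section

def om1 : Ordinal.{0} := (Cardinal.aleph 1).ord

def AEq (c : Ordinal.{0}) (f g : Ordinal.{0} → ℕ) : Prop :=
  {x : Ordinal.{0} | x < c ∧ f x ≠ g x}.Finite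

def InjIio (c : Ordinal.{0}) (f : Ordinal.{0} → ℕ) : Prop := Set.InjOn f (Set.Iio c)

def CoInf (c : Ordinal.{0}) (f : Ordinal.{0} → ℕ) : Prop :=
  {n : ℕ | n ∉ f '' Set.Iio c}.Infinite

lemma countable_Iio_ord {o : Ordinal.{0}} (h : o < om1) : (Set.Iio o).Countable := by
  have h1 : #(Set.Iio o) = Cardinal.lift.{1} o.card := Ordinal.mk_Iio_ordinal o
  have h2 : o.card < Cardinal.aleph 1 := Cardinal.lt_ord.mp h
  have h3 : o.card ≤ ℵ₀ := by
    rwa [← Cardinal.succ_aleph0, Order.lt_succ_iff] at h2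
  rw [← Set.countable_coe_iff, ← Cardinal.mk_le_aleph0_iff, h1]
  calc Cardinal.lift.{1} o.card ≤ Cardinal.lift.{1} ℵ₀ := Cardinal.lift_monotone h3
    _ = ℵ₀ := by simp

lemma AEq.trans' {c : Ordinal.{0}} {f g h : Ordinal.{0} → ℕ}
    (h1 : AEq c f g) (h2 : AEq c g h) : AEq c f h := by
  refine Set.Finite.subset (h1.union h2) ?_
  intro x hx
  rcases hx with ⟨hxc, hne⟩
  by_cases hfg : f x = g x
  · exact Or.inr ⟨hxc, fun e => hne (hfg.trans e)⟩
  · exact Or.inl ⟨hxc, hfg⟩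

lemma AEq.symm' {c : Ordinal.{0}} {f g : Ordinal.{0} → ℕ} (h1 : AEq c f g) : AEq c g f := by
  refine Set.Finite.subset h1 ?_
  intro x hx; exact ⟨hx.1, fun e => hx.2 e.symm⟩

lemma AEq.mono' {c d : Ordinal.{0}} {f g : Ordinal.{0} → ℕ} (hdc : d ≤ c) (h1 : AEq c f g) :
    AEq d f g := Set.Finite.subset h1 (fun x hx => ⟨lt_of_lt_of_le hx.1 hdc, hx.2⟩)

lemma AEq.refl' (c : Ordinal.{0}) (f : Ordinal.{0} → ℕ) : AEq c f f := by
  have : {x : Ordinal.{0} | x < c ∧ f x ≠ f x} = ∅ := by ext x; simp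
  rw [AEq, this]; exact Set.finite_empty

theorem step_lemma (F : Ordinal.{0} → Ordinal.{0} → ℕ) (c d : Ordinal.{0}) (hcd : c < d)
    (hdInj : InjIio d (F d)) (hdCo : CoInf d (F d)) (hdc : AEq c (F d) (F c))
    (f : Ordinal.{0} → ℕ) (Q : Finset ℕ)
    (hfInj : InjIio c f) (hfA : AEq c f (F c)) (hfQ : ∀ m ∈ Q, m ∉ f '' Set.Iio c) :
    ∃ (f' : Ordinal.{0} → ℕ) (Q' : Finset ℕ),
      InjIio d f' ∧ AEq d f' (F d) ∧ (∀ m ∈ Q', m ∉ f' '' Set.Iio d) ∧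
      Q'.card = Q.card + 1 ∧ (∀ x, x < c → f' x = f x) ∧ Q ⊆ Q' := by
  classical
  set g : Ordinal.{0} → ℕ := F d with hg
  -- f and g almost agree below c
  have hfg : AEq c f g := hfA.trans' hdc.symm'
  set D0 : Set Ordinal.{0} := {x | x < c ∧ f x ≠ g x} with hD0def
  have hD0 : D0.Finite := hfg
  have hV0 : (f '' D0).Finite := hD0.image f
  have himg : f '' Set.Iio c ⊆ g '' Set.Iio c ∪ f '' D0 := by
    rintro m ⟨x, hx, rfl⟩
    by_cases hne : f x = g x
    · exact Or.inl ⟨x, hx, hne.symm⟩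
    · exact Or.inr ⟨x, ⟨hx, hne⟩, rfl⟩
  -- pick the protected point p
  have hA' : ({m : ℕ | m ∉ g '' Set.Iio d} \ (f '' D0 ∪ ↑Q)).Infinite :=
    hdCo.diff (hV0.union Q.finite_toSet)
  obtain ⟨p, hp⟩ := hA'.nonempty
  have hpg : p ∉ g '' Set.Iio d := hp.1
  have hpV : p ∉ f '' D0 := fun h => hp.2 (Or.inl h)
  have hpQ : p ∉ Q := fun h => hp.2 (Or.inr h)
  have hpf : p ∉ f '' Set.Iio c := by
    intro h
    rcases himg h with h1 | h1
    · exact hpg (Set.image_mono (f := g) (fun x (hx : x < c) => lt_trans hx hcd) h1)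
    · exact hpV h1
  set Q' : Finset ℕ := insert p Q with hQ'
  -- the bad set B
  set B : Set Ordinal.{0} := {x | c ≤ x ∧ x < d ∧ g x ∈ f '' D0 ∪ ↑Q'} with hBdef
  have hBfin : B.Finite := by
    have h1 : (g '' B).Finite := by
      refine Set.Finite.subset ((hV0.union Q'.finite_toSet)) ?_
      rintro m ⟨x, hx, rfl⟩
      exact hx.2.2
    have h2 : Set.InjOn g B := hdInj.mono (fun x hx => hx.2.1)
    exact Set.Finite.of_finite_image h1 h2
  -- fresh values for corrections
  set W : Set ℕ := f '' Set.Iio c ∪ g '' Set.Iio d ∪ ↑Q' with hW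
  have hWc : ({m : ℕ | m ∉ W}).Infinite := by
    refine Set.Infinite.mono ?_ (hdCo.diff ((hV0.union Q'.finite_toSet)))
    rintro m ⟨hm1, hm2⟩ hmem
    rcases hmem with (h1 | h1) | h1
    · rcases himg h1 with h2 | h2
      · exact hm1 (Set.image_mono (f := g) (fun x (hx : x < c) => lt_trans hx hcd) h2)
      · exact hm2 (Or.inl h2)
    · exact hm1 h1
    · exact hm2 (Or.inr h1)
  obtain ⟨emb⟩ : Nonempty (ℕ ↪ ({m : ℕ | m ∉ W} : Set ℕ)) := ⟨hWc.natEmbedding⟩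
  obtain ⟨iB, hiB⟩ : ∃ iB : B → ℕ, Function.Injective iB :=
    Set.countable_iff_exists_injective.mp hBfin.countable
  set cfun : Ordinal.{0} → ℕ := fun x => if h : x ∈ B then (emb (iB ⟨x, h⟩) : ℕ) else 0 with hcfun
  have hcInj : Set.InjOn cfun B := by
    intro x hx y hy hxy
    simp only [hcfun, dif_pos hx, dif_pos hy] at hxy
    have := emb.injective (Subtype.ext hxy)
    have := hiB this
    exact Subtype.mk_eq_mk.mp this
  have hcW : ∀ x, x ∈ B → cfun x ∉ W := by
    intro x hx
    simp only [hcfun, dif_pos hx]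
    exact (emb (iB ⟨x, hx⟩)).2
  -- the new function
  set f' : Ordinal.{0} → ℕ := fun x => if x < c then f x else if x ∈ B then cfun x else g x
    with hf'
  -- key fact: for x ∈ [c,d) \ B, g x avoids old values
  have hgood : ∀ x, ¬ x < c → x < d → x ∉ B → g x ∉ f '' Set.Iio c ∪ ↑Q' := by
    intro x hxc hxd hxB hmem
    rcases hmem with h1 | h1
    · rcases himg h1 with h2 | h2
      · obtain ⟨y, hy, hgy⟩ := h2
        have := hdInj (lt_trans hy hcd) hxd hgy
        exact hxc (this ▸ hy)
      · exact hxB ⟨not_lt.mp hxc, hxd, Or.inl h2⟩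
    · exact hxB ⟨not_lt.mp hxc, hxd, Or.inr h1⟩
  refine ⟨f', Q', ?_, ?_, ?_, ?_, ?_, ?_⟩
  · -- injectivity on Iio d
    intro x hx y hy hxy
    simp only [Set.mem_Iio] at hx hy
    by_cases hxc : x < c <;> by_cases hyc : y < c
    · exact hfInj hxc hyc (by simpa only [hf', if_pos hxc, if_pos hyc] using hxy)
    · exfalso
      simp only [hf', if_pos hxc, if_neg hyc] at hxy
      by_cases hyB : y ∈ B
      · rw [if_pos hyB] at hxy
        exact hcW y hyB (Or.inl (Or.inl ⟨x, hxc, hxy⟩))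
      · rw [if_neg hyB] at hxy
        exact hgood y hyc hy hyB (Or.inl ⟨x, hxc, hxy⟩)
    · exfalso
      simp only [hf', if_neg hxc, if_pos hyc] at hxy
      by_cases hxB : x ∈ B
      · rw [if_pos hxB] at hxy
        exact hcW x hxB (Or.inl (Or.inl ⟨y, hyc, hxy.symm⟩))
      · rw [if_neg hxB] at hxy
        exact hgood x hxc hx hxB (Or.inl ⟨y, hyc, hxy.symm⟩)
    · simp only [hf', if_neg hxc, if_neg hyc] at hxy
      by_cases hxB : x ∈ B <;> by_cases hyB : y ∈ B
      · rw [if_pos hxB, if_pos hyB] at hxy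
        exact hcInj hxB hyB hxy
      · exfalso
        rw [if_pos hxB, if_neg hyB] at hxy
        exact hcW x hxB (Or.inl (Or.inr ⟨y, hy, hxy.symm⟩))
      · exfalso
        rw [if_neg hxB, if_pos hyB] at hxy
        exact hcW y hyB (Or.inl (Or.inr ⟨x, hx, hxy⟩))
      · rw [if_neg hxB, if_neg hyB] at hxy
        exact hdInj hx hy hxy
  · -- AEq d f' g
    refine Set.Finite.subset (hD0.union hBfin) ?_
    rintro x ⟨hxd, hxne⟩
    by_cases hxc : x < c
    · simp only [hf', if_pos hxc] at hxne
      exact Or.inl ⟨hxc, hxne⟩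
    · by_cases hxB : x ∈ B
      · exact Or.inr hxB
      · exfalso
        simp only [hf', if_neg hxc, if_neg hxB] at hxne
        exact hxne rfl
  · -- Q' disjoint from new image
    rintro m hmQ' ⟨x, hx, rfl⟩
    simp only [Set.mem_Iio] at hx
    by_cases hxc : x < c
    · simp only [hf', if_pos hxc] at hmQ'
      rcases Finset.mem_insert.mp hmQ' with h1 | h1
      · exact hpf (h1 ▸ ⟨x, hxc, rfl⟩)
      · exact hfQ _ h1 ⟨x, hxc, rfl⟩
    · by_cases hxB : x ∈ B
      · have : f' x ∉ W := by simpa only [hf', if_neg hxc, if_pos hxB] using hcW x hxB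
        exact this (Or.inr (Finset.mem_coe.mpr (by simpa only [hf', if_neg hxc, if_pos hxB] using hmQ')))
      · have : f' x = g x := by simp only [hf', if_neg hxc, if_neg hxB]
        exact hgood x hxc hx hxB (Or.inr (by rwa [← this]))
  · -- cardinality
    rw [hQ', Finset.card_insert_of_notMem hpQ]
  · intro x hxc
    simp only [hf', if_pos hxc]
  · exact Finset.subset_insert p Q

theorem exists_ext (a : Ordinal.{0}) (ha : a < om1) (F : Ordinal.{0} → Ordinal.{0} → ℕ)
    (hF : ∀ c, c < a → InjIio c (F c) ∧ CoInf c (F c) ∧ ∀ d, d < c → AEq d (F c) (F d)) :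
    ∃ e, InjIio a e ∧ CoInf a e ∧ ∀ c, c < a → AEq c e (F c) := by
  rcases Ordinal.zero_or_succ_or_isSuccLimit a with h0 | ⟨b, rfl⟩ | hlim
  · subst h0
    refine ⟨fun _ => 0, ?_, ?_, ?_⟩
    · intro x hx; exact absurd hx (not_lt_of_ge (zero_le (a := x)))
    · have hIio : (Set.Iio (0:Ordinal.{0})) = ∅ := by
        ext x; simp [not_lt_of_ge (zero_le (a := x))]
      have : (fun (_ : Ordinal.{0}) => 0) '' Set.Iio 0 = ∅ := by rw [hIio]; simp
      rw [CoInf, this]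
      simpa using Set.infinite_univ
    · intro c hc; exact absurd hc (not_lt_of_ge (zero_le (a := c)))
  · -- successor case: a = succ b
    obtain ⟨hbInj, hbCo, hbCoh⟩ := hF b (Order.lt_succ b)
    obtain ⟨n0, hn0⟩ := hbCo.nonempty
    refine ⟨fun x => if x = b then n0 else F b x, ?_, ?_, ?_⟩
    · intro x hx y hy hxy
      simp only [Set.mem_Iio, Order.lt_succ_iff] at hx hy
      by_cases hxb : x = b <;> by_cases hyb : y = b
      · rw [hxb, hyb]
      · exfalso
        simp only [if_pos hxb, if_neg hyb] at hxy
        exact hn0 ⟨y, lt_of_le_of_ne hy hyb, hxy.symm⟩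
      · exfalso
        simp only [if_neg hxb, if_pos hyb] at hxy
        exact hn0 ⟨x, lt_of_le_of_ne hx hxb, hxy⟩
      · simp only [if_neg hxb, if_neg hyb] at hxy
        exact hbInj (lt_of_le_of_ne hx hxb) (lt_of_le_of_ne hy hyb) hxy
    · refine Set.Infinite.mono ?_ (hbCo.diff (Set.finite_singleton n0))
      rintro m ⟨hm1, hm2⟩ ⟨x, hx, hfx⟩
      simp only [Set.mem_Iio, Order.lt_succ_iff] at hx
      by_cases hxb : x = b
      · simp only [if_pos hxb] at hfx
        exact hm2 (Set.mem_singleton_iff.mpr hfx.symm)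
      · simp only [if_neg hxb] at hfx
        exact hm1 ⟨x, lt_of_le_of_ne hx hxb, hfx⟩
    · intro c hc
      rw [Order.lt_succ_iff] at hc
      have key : AEq c (fun x => if x = b then n0 else F b x) (F b) := by
        refine Set.Finite.subset Set.finite_empty ?_
        rintro x ⟨hx1, hx2⟩
        have hxb : x ≠ b := ne_of_lt (lt_of_lt_of_le hx1 hc)
        simp only [if_neg hxb] at hx2
        exact hx2 rfl
      rcases eq_or_lt_of_le hc with rfl | hlt
      · exact key
      · exact key.trans' (hbCoh c hlt)
  · -- limit case
    classical
    have h0 : (0:Ordinal.{0}) < a := hlim.pos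
    obtain ⟨g0, hg0⟩ := (countable_Iio_ord ha).exists_eq_range ⟨0, h0⟩
    have hg0lt : ∀ n, g0 n < a := by
      intro n
      have : g0 n ∈ Set.Iio a := by rw [hg0]; exact ⟨n, rfl⟩
      exact this
    set s : ℕ → Ordinal.{0} :=
      fun n => Nat.rec (motive := fun _ => Ordinal.{0}) (g0 0)
        (fun m prev => max (prev+1) (g0 (m+1))) n with hs
    have hs0 : s 0 = g0 0 := rfl
    have hsS : ∀ n, s (n+1) = max (s n + 1) (g0 (n+1)) := fun n => rfl
    have hslt : ∀ n, s n < a := by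
      intro n
      induction n with
      | zero => exact hg0lt 0
      | succ n ih =>
        rw [hsS]
        refine max_lt ?_ (hg0lt (n+1))
        rw [Ordinal.add_one_eq_succ]
        exact hlim.succ_lt ih
    have hsmono : ∀ n, s n < s (n+1) := by
      intro n
      rw [hsS]
      refine lt_of_lt_of_le ?_ (le_max_left _ _)
      rw [Ordinal.add_one_eq_succ]
      exact Order.lt_succ _
    have hsmono' : ∀ m n, m ≤ n → s m ≤ s n := by
      intro m n h
      exact monotone_nat_of_le_succ (fun k => (hsmono k).le) h
    have hsge : ∀ n, g0 n ≤ s n := by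
      intro n
      cases n with
      | zero => exact le_of_eq hs0.symm
      | succ n => rw [hsS]; exact le_max_right _ _
    have hscof : ∀ c, c < a → ∃ n, c < s n := by
      intro c hc
      have : c ∈ Set.range g0 := by rw [← hg0]; exact hc
      obtain ⟨n, rfl⟩ := this
      exact ⟨n+1, lt_of_le_of_lt (hsge n) (hsmono n)⟩
    set Inv : ℕ → (Ordinal.{0} → ℕ) × Finset ℕ → Prop := fun n st =>
      InjIio (s n) st.1 ∧ AEq (s n) st.1 (F (s n)) ∧
      (∀ m ∈ st.2, m ∉ st.1 '' Set.Iio (s n)) ∧ n ≤ st.2.card with hInvdef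
    have step : ∀ n st, Inv n st → ∃ st' : (Ordinal.{0} → ℕ) × Finset ℕ,
        Inv (n+1) st' ∧ (∀ x, x < s n → st'.1 x = st.1 x) ∧ st.2 ⊆ st'.2 := by
      intro n st hst
      obtain ⟨hdInj, hdCo, hdCoh⟩ := hF (s (n+1)) (hslt (n+1))
      obtain ⟨f', Q', h1, h2, h3, h4, h5, h6⟩ :=
        step_lemma F (s n) (s (n+1)) (hsmono n) hdInj hdCo (hdCoh (s n) (hsmono n))
          st.1 st.2 hst.1 hst.2.1 hst.2.2.1
      refine ⟨(f', Q'), ⟨h1, h2, h3, ?_⟩, h5, h6⟩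
      rw [h4]
      exact Nat.succ_le_succ hst.2.2.2
    set next : ℕ → (Ordinal.{0} → ℕ) × Finset ℕ → (Ordinal.{0} → ℕ) × Finset ℕ :=
      fun n st => if h : Inv n st then (step n st h).choose else st with hnext
    set seq : ℕ → (Ordinal.{0} → ℕ) × Finset ℕ :=
      fun n => Nat.rec (motive := fun _ => (Ordinal.{0} → ℕ) × Finset ℕ)
        (F (s 0), (∅ : Finset ℕ)) next n with hseq
    have hseqS : ∀ n, seq (n+1) = next n (seq n) := fun n => rfl
    have hInv : ∀ n, Inv n (seq n) := by
      intro n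
      induction n with
      | zero =>
        refine ⟨(hF (s 0) (hslt 0)).1, AEq.refl' _ _, ?_, Nat.zero_le _⟩
        intro m hm
        exact absurd hm (Finset.notMem_empty m)
      | succ n ih =>
        have e1 : seq (n+1) = (step n (seq n) ih).choose := by
          rw [hseqS, hnext]
          exact dif_pos ih
        rw [e1]
        exact ((step n (seq n) ih).choose_spec).1
    have hlink : ∀ n, (∀ x, x < s n → (seq (n+1)).1 x = (seq n).1 x) ∧
        (seq n).2 ⊆ (seq (n+1)).2 := by
      intro n
      have e1 : seq (n+1) = (step n (seq n) (hInv n)).choose := by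
        rw [hseqS, hnext]
        exact dif_pos (hInv n)
      rw [e1]
      exact ⟨((step n (seq n) (hInv n)).choose_spec).2.1,
        ((step n (seq n) (hInv n)).choose_spec).2.2⟩
    have hagree : ∀ n m, n ≤ m → ∀ x, x < s n → (seq m).1 x = (seq n).1 x := by
      intro n m h
      induction h with
      | refl => intro x _; rfl
      | @step m h ih =>
        intro x hx
        have hx' : x < s m := lt_of_lt_of_le hx (hsmono' n m h)
        rw [(hlink m).1 x hx']
        exact ih x hx
    have hQmono : ∀ n m, n ≤ m → (seq n).2 ⊆ (seq m).2 := by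
      intro n m h
      induction h with
      | refl => exact Finset.Subset.refl _
      | @step m h ih => exact ih.trans (hlink m).2
    set e : Ordinal.{0} → ℕ :=
      fun x => if h : ∃ n, x < s n then (seq (Nat.find h)).1 x else 0 with he
    have hev : ∀ n x, x < s n → e x = (seq n).1 x := by
      intro n x hx
      have hex : ∃ m, x < s m := ⟨n, hx⟩
      have hxN : x < s (Nat.find hex) := Nat.find_spec hex
      simp only [he, dif_pos hex]
      rcases le_total n (Nat.find hex) with h | h
      · exact hagree n (Nat.find hex) h x hx
      · exact (hagree (Nat.find hex) n h x hxN).symm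
    refine ⟨e, ?_, ?_, ?_⟩
    · intro x hx y hy hxy
      simp only [Set.mem_Iio] at hx hy
      obtain ⟨nx, hnx⟩ := hscof x hx
      obtain ⟨ny, hny⟩ := hscof y hy
      have hx' : x < s (max nx ny) := lt_of_lt_of_le hnx (hsmono' _ _ (le_max_left _ _))
      have hy' : y < s (max nx ny) := lt_of_lt_of_le hny (hsmono' _ _ (le_max_right _ _))
      rw [hev _ x hx', hev _ y hy'] at hxy
      exact (hInv (max nx ny)).1 hx' hy' hxy
    · have hUinf : (⋃ n, ((seq n).2 : Set ℕ)).Infinite := by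
        intro hfin
        have hsub : ((seq (hfin.toFinset.card + 1)).2 : Finset ℕ) ⊆ hfin.toFinset := by
          intro m hm
          exact hfin.mem_toFinset.mpr (Set.mem_iUnion.mpr ⟨hfin.toFinset.card + 1, Finset.mem_coe.mpr hm⟩)
        have h1 := Finset.card_le_card hsub
        have h2 := (hInv (hfin.toFinset.card + 1)).2.2.2
        omega
      refine Set.Infinite.mono ?_ hUinf
      intro m hm
      obtain ⟨j, hj⟩ := Set.mem_iUnion.mp hm
      rintro ⟨x, hx, rfl⟩
      simp only [Set.mem_Iio] at hx
      obtain ⟨nx, hnx⟩ := hscof x hx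
      have hx' : x < s (max j nx) := lt_of_lt_of_le hnx (hsmono' _ _ (le_max_right _ _))
      refine (hInv (max j nx)).2.2.1 (e x) (hQmono j _ (le_max_left _ _) hj) ?_
      exact ⟨x, hx', (hev _ x hx').symm⟩
    · intro c hc
      obtain ⟨n, hn⟩ := hscof c hc
      have h1 : AEq (s n) (seq n).1 (F (s n)) := (hInv n).2.1
      have h2 : AEq c (F (s n)) (F c) := (hF (s n) (hslt n)).2.2 c hn
      have h0' : AEq c e (seq n).1 := by
        refine Set.Finite.subset Set.finite_empty ?_
        rintro x ⟨hxc, hxne⟩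
        exact hxne (hev n x (lt_trans hxc hn))
      exact h0'.trans' ((h1.mono' hn.le).trans' h2)
end

noncomputable section
def Eseq : Ordinal.{0} → Ordinal.{0} → ℕ :=
  Ordinal.lt_wf.fix (fun a IH => Classical.epsilon
    (fun e => InjIio a e ∧ CoInf a e ∧ ∀ c, ∀ h : c < a, AEq c e (IH c h)))

lemma Eseq_def (a : Ordinal.{0}) : Eseq a = Classical.epsilon
    (fun e => InjIio a e ∧ CoInf a e ∧ ∀ c, ∀ _h : c < a, AEq c e (Eseq c)) :=
  Ordinal.lt_wf.fix_eq _ a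

lemma Eseq_good : ∀ a, a < om1 →
    InjIio a (Eseq a) ∧ CoInf a (Eseq a) ∧ ∀ c, c < a → AEq c (Eseq a) (Eseq c) := by
  intro a
  induction a using Ordinal.induction with
  | h a IH =>
    intro ha
    obtain ⟨e, he⟩ := exists_ext a ha Eseq (fun c hc => IH c hc (lt_trans hc ha))
    have hspec := Classical.epsilon_spec
      (p := fun e => InjIio a e ∧ CoInf a e ∧ ∀ c, ∀ _h : c < a, AEq c e (Eseq c))
      ⟨e, he.1, he.2.1, fun c h => he.2.2 c h⟩
    rw [Eseq_def a]
    exact ⟨hspec.1, hspec.2.1, fun c hc => hspec.2.2 c hc⟩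
end


-- meagre lemma
lemma closed_part (f : ℕ → ℕ) (N : ℕ) : IsClosed {y : ℕ → ℕ | ∀ n, N ≤ n → y n ≠ f n} := by
  have : {y : ℕ → ℕ | ∀ n, N ≤ n → y n ≠ f n} = ⋂ (n : ℕ), ⋂ (_ : N ≤ n), (fun y : ℕ → ℕ => y n) ⁻¹' ({f n}ᶜ) := by
    ext y; simp [Set.mem_iInter]
  rw [this]
  refine isClosed_iInter fun n => isClosed_iInter fun _ => IsClosed.preimage (continuous_apply n) ?_
  exact isClosed_compl_iff.mpr (isOpen_discrete _)

lemma meagre_M (f : ℕ → ℕ) : IsMeagre {y : ℕ → ℕ | {n | y n = f n}.Finite} := by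
  have hsub : {y : ℕ → ℕ | {n | y n = f n}.Finite} ⊆ ⋃ N : ℕ, {y | ∀ n, N ≤ n → y n ≠ f n} := by
    intro y hy
    obtain ⟨N, hN⟩ := hy.bddAbove
    refine mem_iUnion.mpr ⟨N + 1, fun n hn hne => ?_⟩
    have := hN hne
    omega
  refine IsMeagre.mono hsub (isMeagre_iUnion fun N => ?_)
  -- each piece is closed nowhere dense
  have hcl := closed_part f N
  have hint : interior {y : ℕ → ℕ | ∀ n, N ≤ n → y n ≠ f n} = ∅ := by
    by_contra h
    obtain ⟨z, hz⟩ := Set.nonempty_iff_ne_empty.mpr h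
    obtain ⟨I, u, hu, hsub2⟩ := isOpen_pi_iff.mp isOpen_interior z hz
    set n0 := N + (I.sup id) + 1 with hn0
    have hn0N : N ≤ n0 := by omega
    have hn0I : n0 ∉ I := by
      intro hmem
      have := Finset.le_sup (f := id) hmem
      simp only [id] at this
      omega
    set w : ℕ → ℕ := fun n => if n ∈ I then z n else f n with hw
    have hwmem : w ∈ (I : Set ℕ).pi u := by
      intro i hi
      simp only [hw, Finset.mem_coe.mp hi, if_pos (Finset.mem_coe.mp hi)]
      exact (hu i hi).2
    have hwC : w ∈ interior {y : ℕ → ℕ | ∀ n, N ≤ n → y n ≠ f n} := hsub2 hwmem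
    have := interior_subset hwC n0 hn0N
    simp only [hw, if_neg hn0I] at this
    exact this rfl
  have : IsNowhereDense {y : ℕ → ℕ | ∀ n, N ≤ n → y n ≠ f n} := hcl.isNowhereDense_iff.mpr hint
  rw [isMeagre_iff_countable_union_isNowhereDense]
  exact ⟨{{y | ∀ n, N ≤ n → y n ≠ f n}}, by simpa using this, countable_singleton _, by simp⟩

/-- If there is a Luzin set in Baire space, then property (**) holds. -/
theorem luzin_implies_star2
    (L : Set (ℕ → ℕ)) (hunc : ¬ L.Countable)
    (hL : ∀ M : Set (ℕ → ℕ), IsMeagre M → (L ∩ M).Countable) :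
    ∃ h : Omega1 → ℕ → Omega1,
      ∀ k : ℕ → Omega1, {α : Omega1 | {n : ℕ | h α n = k n}.Finite}.Countable := by
  classical
  -- an ω₁-sequence of distinct elements of L
  have hcard : Cardinal.lift.{0,1} #Omega1 ≤ Cardinal.lift.{1,0} #(↥L) := by
    rw [Cardinal.lift_id'.{0,1}]
    have h1 : #Omega1 = Cardinal.lift.{1,0} (Cardinal.aleph 1) := by
      have h0 := Ordinal.mk_Iio_ordinal (Cardinal.aleph 1).ord
      rw [Cardinal.card_ord] at h0
      exact h0
    have h2 : Cardinal.aleph 1 ≤ #(↥L) := by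
      have : ¬ (#(↥L) ≤ ℵ₀) := by
        rw [Cardinal.mk_le_aleph0_iff, Set.countable_coe_iff]
        exact hunc
      rw [← Cardinal.succ_aleph0]
      exact Order.succ_le_of_lt (not_le.mp this)
    rw [h1]
    exact Cardinal.lift_monotone h2
  obtain ⟨emb⟩ : Nonempty (Omega1 ↪ ↥L) := Cardinal.lift_mk_le'.mp hcard
  set x : Omega1 → (ℕ → ℕ) := fun α => (emb α : ℕ → ℕ) with hx
  have hxinj : Function.Injective x := fun a b h => emb.injective (Subtype.ext h)
  have hxL : ∀ α, x α ∈ L := fun α => (emb α).2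
  -- decoder
  have h0om : (0:Ordinal.{0}) < om1 := by
    rw [om1, Cardinal.lt_ord]
    simpa using aleph0_pos.trans Cardinal.aleph0_lt_aleph_one
  set dec : Omega1 → ℕ → Omega1 := fun α m =>
    if h : ∃ ξ : Omega1, ξ.1 < α.1 ∧ Eseq α.1 ξ.1 = m then h.choose else ⟨0, h0om⟩ with hdec
  refine ⟨fun α n => dec α (x α n), ?_⟩
  intro k
  -- a countable bound for the range of k
  obtain ⟨b, hbom, hbk⟩ : ∃ b : Ordinal.{0}, b < om1 ∧ ∀ n, (k n).1 < b := by
    refine ⟨iSup (fun n => Order.succ (k n).1), ?_, ?_⟩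
    · refine Cardinal.iSup_lt_ord_lift_of_isRegular Cardinal.isRegular_aleph_one ?_ ?_
      · simpa using Cardinal.aleph0_lt_aleph_one
      · intro i
        exact (Cardinal.isSuccLimit_ord Cardinal.aleph0_lt_aleph_one.le).succ_lt (k i).2
    · intro n
      exact lt_of_lt_of_le (Order.lt_succ _) (Ordinal.le_iSup _ n)
  -- the countable family of codes
  set P0 : Set (Ordinal.{0} → ℕ) :=
    {p | {ξ : Ordinal.{0} | ξ < b ∧ p ξ ≠ Eseq b ξ}.Finite ∧ ∀ ξ, ¬ ξ < b → p ξ = 0} with hP0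
  have hP0count : P0.Countable := by
    have hT : {t : Set (Ordinal.{0} × ℕ) | t.Finite ∧ t ⊆ (Set.Iio b ×ˢ (Set.univ : Set ℕ))}.Countable :=
      Set.countable_setOf_finite_subset ((countable_Iio_ord hbom).prod Set.countable_univ)
    set G : (Ordinal.{0} → ℕ) → Set (Ordinal.{0} × ℕ) :=
      fun p => (fun ξ => (ξ, p ξ)) '' {ξ : Ordinal.{0} | ξ < b ∧ p ξ ≠ Eseq b ξ} with hG
    have hGmaps : ∀ p ∈ P0, G p ∈ {t : Set (Ordinal.{0} × ℕ) | t.Finite ∧ t ⊆ (Set.Iio b ×ˢ (Set.univ : Set ℕ))} := by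
      rintro p ⟨hp1, hp2⟩
      refine ⟨hp1.image _, ?_⟩
      rintro q ⟨ξ, hξ, rfl⟩
      exact ⟨hξ.1, Set.mem_univ _⟩
    have hGinj : Set.InjOn G P0 := by
      rintro p hp q hq hpq
      funext ξ
      by_cases hξb : ξ < b
      · by_cases h1 : p ξ = Eseq b ξ <;> by_cases h2 : q ξ = Eseq b ξ
        · rw [h1, h2]
        · exfalso
          have : (ξ, q ξ) ∈ G q := ⟨ξ, ⟨hξb, h2⟩, rfl⟩
          rw [← hpq] at this
          obtain ⟨η, hη, heq⟩ := this
          have hηξ : η = ξ := congrArg Prod.fst heq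
          subst hηξ
          exact hη.2 h1
        · exfalso
          have : (ξ, p ξ) ∈ G p := ⟨ξ, ⟨hξb, h1⟩, rfl⟩
          rw [hpq] at this
          obtain ⟨η, hη, heq⟩ := this
          have hηξ : η = ξ := congrArg Prod.fst heq
          subst hηξ
          exact hη.2 h2
        · have : (ξ, p ξ) ∈ G p := ⟨ξ, ⟨hξb, h1⟩, rfl⟩
          rw [hpq] at this
          obtain ⟨η, hη, heq⟩ := this
          have hηξ : η = ξ := congrArg Prod.fst heq
          subst hηξ
          exact (congrArg Prod.snd heq).symm
      · rw [hp.2 ξ hξb, hq.2 ξ hξb]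
    have hGP : (G '' P0).Countable := by
      refine Set.Countable.mono ?_ hT
      rintro t ⟨p, hp, rfl⟩
      exact hGmaps p hp
    obtain ⟨j, hj⟩ := Set.countable_iff_exists_injOn.mp hGP
    refine Set.countable_iff_exists_injOn.mpr ⟨fun p => j (G p), ?_⟩
    intro p hp q hq hpq
    exact hGinj hp hq (hj (Set.mem_image_of_mem G hp) (Set.mem_image_of_mem G hq) hpq)
  set Fam : Set (ℕ → ℕ) := (fun p => fun n => p (k n).1) '' P0 with hFam
  have hFamc : Fam.Countable := hP0count.image _
  -- the main inclusion
  have main : {α : Omega1 | {n : ℕ | dec α (x α n) = k n}.Finite} ⊆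
      {α : Omega1 | α.1 ≤ b} ∪ ⋃ f ∈ Fam, {α : Omega1 | {n | x α n = f n}.Finite} := by
    intro α hα
    by_cases hab : α.1 ≤ b
    · exact Or.inl hab
    push_neg at hab
    right
    have haom : α.1 < om1 := α.2
    set p : Ordinal.{0} → ℕ := fun ξ => if ξ < b then Eseq α.1 ξ else 0 with hp
    have hpP0 : p ∈ P0 := by
      constructor
      · have hcoh : AEq b (Eseq α.1) (Eseq b) := (Eseq_good α.1 haom).2.2 b hab
        refine Set.Finite.subset hcoh ?_
        rintro ξ ⟨hξ1, hξ2⟩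
        simp only [hp, if_pos hξ1] at hξ2
        exact ⟨hξ1, hξ2⟩
      · intro ξ hξ
        simp only [hp, if_neg hξ]
    have hf0 : (fun n => p (k n).1) ∈ Fam := ⟨p, hpP0, rfl⟩
    refine Set.mem_biUnion hf0 ?_
    have hfin : {n : ℕ | x α n = p (k n).1} ⊆ {n : ℕ | dec α (x α n) = k n} := by
      intro n hn
      have hn' : x α n = p (k n).1 := hn
      have hkb : (k n).1 < b := hbk n
      have hf0n : p (k n).1 = Eseq α.1 (k n).1 := by
        simp only [hp, if_pos hkb]
      have hex : ∃ ξ : Omega1, ξ.1 < α.1 ∧ Eseq α.1 ξ.1 = x α n :=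
        ⟨k n, lt_trans hkb hab, by rw [hn', hf0n]⟩
      show dec α (x α n) = k n
      simp only [hdec, dif_pos hex]
      obtain ⟨h1, h2⟩ := hex.choose_spec
      have hinj := (Eseq_good α.1 haom).1
      have heq : hex.choose.1 = (k n).1 :=
        hinj (Set.mem_Iio.mpr h1) (Set.mem_Iio.mpr (lt_trans hkb hab))
          (by rw [h2, hn', hf0n])
      exact Subtype.ext heq
    exact Set.Finite.subset hα hfin
  refine Set.Countable.mono main (Set.Countable.union ?_ ?_)
  · have h1 : (Set.Iic b).Countable := by
      refine Set.Countable.mono (Order.Iic_subset_Iio_succ b) (countable_Iio_ord ?_)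
      exact (Cardinal.isSuccLimit_ord Cardinal.aleph0_lt_aleph_one.le).succ_lt hbom
    exact Set.Countable.preimage h1 (f := fun α : Omega1 => α.1) Subtype.val_injective
  · refine Set.Countable.biUnion hFamc ?_
    intro f _
    have h1 : {α : Omega1 | {n | x α n = f n}.Finite} = x ⁻¹' (L ∩ {y | {n | y n = f n}.Finite}) := by
      ext α
      simp only [Set.mem_setOf_eq, Set.mem_preimage, Set.mem_inter_iff]
      exact ⟨fun h => ⟨hxL α, h⟩, fun h => h.2⟩
    rw [h1]
    exact Set.Countable.preimage (hL _ (meagre_M f)) hxinj
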